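/- Fix d > 0, λ > 0, u ∈ ℝ and b̂ ∈ ℝ with b̂ ≠ 0. Then the nonnegative garrote objective h(β) = dβ² − 2uβ + 2λβ/b̂, minimized over the constraint set Θ = {β ∈ ℝ : β·b̂ ≥ 0}, attains its minimum at β* = ((u·b̂ − λ)₊/(d·b̂²))·b̂. -/

import Mathlib

/-- closed-form nonnegative garrote update.
Fix `d > 0`, `λ > 0`, `u ∈ ℝ` and `b̂ ≠ 0`.  The nonnegative garrote
objective `h(β) = dβ² − 2uβ + 2λβ/b̂`, minimized over
`Θ = {β : β·b̂ ≥ 0}`, attains its minimum at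
`β* = ((u·b̂ − λ)₊/(d·b̂²))·b̂`. -/
theorem stmt17 (d lam u bhat : ℝ) (hd : 0 < d) (hlam : 0 < lam) (hb : bhat ≠ 0)
    (βstar : ℝ)
    (hβstar : βstar = (max (u * bhat - lam) 0 / (d * bhat ^ 2)) * bhat) :
    0 ≤ βstar * bhat ∧
    ∀ β : ℝ, 0 ≤ β * bhat →
      d * βstar ^ 2 - 2 * u * βstar + 2 * lam * βstar / bhat
        ≤ d * β ^ 2 - 2 * u * β + 2 * lam * β / bhat := by
  have hb2 : (0:ℝ) < bhat ^ 2 := by positivity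
  have hm : 0 ≤ max (u * bhat - lam) 0 := le_max_right _ _
  have hst : βstar * bhat = max (u * bhat - lam) 0 / (d * bhat ^ 2) * bhat ^ 2 := by
    rw [hβstar]; ring
  refine ⟨by rw [hst]; positivity, ?_⟩
  intro β hβ
  rw [← mul_le_mul_iff_left₀ hb2]
  have e1 : (d * βstar ^ 2 - 2 * u * βstar + 2 * lam * βstar / bhat) * bhat ^ 2
      = d * (βstar * bhat) ^ 2 - 2 * (u * bhat) * (βstar * bhat) + 2 * lam * (βstar * bhat) := by
    field_simp
  have e2 : (d * β ^ 2 - 2 * u * β + 2 * lam * β / bhat) * bhat ^ 2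
      = d * (β * bhat) ^ 2 - 2 * (u * bhat) * (β * bhat) + 2 * lam * (β * bhat) := by
    field_simp
  rw [e1, e2, hst]
  have hxs : max (u * bhat - lam) 0 / (d * bhat ^ 2) * bhat ^ 2
      = max (u * bhat - lam) 0 / d := by
    field_simp
  rw [hxs]
  rcases le_or_gt (u * bhat - lam) 0 with h | h
  · rw [max_eq_right h]
    simp only [zero_div]
    nlinarith [mul_nonneg hβ (neg_nonneg.mpr h), sq_nonneg (β * bhat)]
  · rw [max_eq_left h.le]
    have hdB : d * ((u * bhat - lam) / d) = u * bhat - lam := by field_simp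
    nlinarith [sq_nonneg (d * (β * bhat) - (u * bhat - lam)), hdB, hd,
      sq_nonneg (β * bhat - (u * bhat - lam) / d),
      mul_pos hd hd]
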